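/- For η ∈ ℝ, define M(η) := [[(9−2η)/2, −(3−η)/2, −(6−η)/4, −(6−η)/4], [−(3−η)/2, 1/2, (2−η)/4, (2−η)/4], [−(6−η)/4, (2−η)/4, 1/2, 1/2], [−(6−η)/4, (2−η)/4, 1/2, 1/2]] and P(η) := [[0,0,0,0], [0, −3/2, (6−η)/4, (6−η)/4], [0, (6−η)/4, 0, 0], [0, (6−η)/4, 0, 0]], both 4×4 symmetric real matrices. Then for every η ∈ (0,3) there exists Δ̄ > 0 such that for all Δ ∈ [0, Δ̄], the matrix M(η) + Δ·P(η) is positive semidefinite. -/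

import Mathlib

set_option maxHeartbeats 1000000


noncomputable section

/-- The 4×4 matrix arising in the certificate proof that the pattern `(3-η, 3/2)` is
straightforward. -/
def certM (η : ℝ) : Matrix (Fin 4) (Fin 4) ℝ :=
  !![(9 - 2 * η) / 2, -(3 - η) / 2, -(6 - η) / 4, -(6 - η) / 4;
     -(3 - η) / 2, 1 / 2, (2 - η) / 4, (2 - η) / 4;
     -(6 - η) / 4, (2 - η) / 4, 1 / 2, 1 / 2;
     -(6 - η) / 4, (2 - η) / 4, 1 / 2, 1 / 2]

/-- The 4×4 perturbation matrix in the certificate proof for the pattern `(3-η, 3/2)`. -/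
def certP (η : ℝ) : Matrix (Fin 4) (Fin 4) ℝ :=
  !![0, 0, 0, 0;
     0, -3 / 2, (6 - η) / 4, (6 - η) / 4;
     0, (6 - η) / 4, 0, 0;
     0, (6 - η) / 4, 0, 0]

/-- For every `η ∈ (0,3)`, `M(η) + Δ·P(η)` remains positive semidefinite for all
sufficiently small `Δ ≥ 0`. -/
theorem certM_perturbed_psd :
    ∀ η : ℝ, 0 < η → η < 3 →
      ∃ Δbar : ℝ, 0 < Δbar ∧ ∀ Δ : ℝ, 0 ≤ Δ → Δ ≤ Δbar →
        (certM η + Δ • certP η).PosSemidef := by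
  intro η hη1 hη2
  refine ⟨η / 162, by positivity, ?_⟩
  intro Δ hΔ0 hΔ1
  rw [Matrix.posSemidef_iff_dotProduct_mulVec]
  constructor
  · ext i j
    fin_cases i <;> fin_cases j <;>
      simp [certM, certP, Matrix.IsHermitian, Matrix.conjTranspose_apply,
        Matrix.add_apply, Matrix.smul_apply, Matrix.vecHead, Matrix.vecTail]
  · intro x
    have hα : (0:ℝ) < η * (4 - η) := by nlinarith
    set a := x 0 with ha
    set b := x 1 with hb
    set c := x 2 with hc
    set d := x 3 with hd
    have hq : dotProduct (star x) ((certM η + Δ • certP η).mulVec x) =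
        ((9 - 2*η)/2) * a^2 + (1/2 - 3*Δ/2) * b^2 + (1/2) * c^2 + (1/2) * d^2
          - (3 - η) * a * b - ((6 - η)/2) * a * (c + d)
          + ((2 - η)/2 + Δ * (6 - η)/2) * b * (c + d) + c * d := by
      simp [certM, certP, Matrix.mulVec, dotProduct, Fin.sum_univ_four,
        Matrix.add_apply, Matrix.smul_apply, Matrix.vecHead, Matrix.vecTail,
        ← ha, ← hb, ← hc, ← hd]
      ring
    rw [hq]
    -- residual coefficient nonnegativity:
    have hres : 0 ≤ (η * (4 - η) * Δ / 2 * (9/2 - η - Δ * (6 - η)^2 / 8)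
        - Δ^2 * (6 - η)^4 / 16) * b^2 := by
      have h1 : 0 ≤ η * (4 - η) * Δ / 2 * (9/2 - η - Δ * (6 - η)^2 / 8)
          - Δ^2 * (6 - η)^4 / 16 := by
        have hw : (6 - η)^2 ≤ 36 := by nlinarith
        have hw4 : (6 - η)^4 ≤ 1296 := by nlinarith [sq_nonneg ((6-η)^2)]
        have h4 : η * (4 - η) ≤ 4 := by nlinarith [sq_nonneg (η - 2)]
        have hprod : η * (4 - η) * (6 - η)^2 ≤ 144 := by
          nlinarith [mul_le_mul h4 hw (sq_nonneg (6 - η)) (by norm_num : (0:ℝ) ≤ 4)]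
        have hco : η * (4 - η) * (6 - η)^2 / 16 + (6 - η)^4 / 16 ≤ 90 := by linarith
        have hlow : 3 * η / 4 ≤ η * (4 - η) * (9/2 - η) / 2 := by
          nlinarith [mul_nonneg hη1.le
            (by nlinarith : (0:ℝ) ≤ (4 - η) * (9/2 - η) - 3/2)]
        have hstep : Δ * (η * (4 - η) * (6 - η)^2 / 16 + (6 - η)^4 / 16) ≤ Δ * 90 :=
          mul_le_mul_of_nonneg_left hco hΔ0
        have hinner : 0 ≤ η * (4 - η) * (9/2 - η) / 2
            - Δ * (η * (4 - η) * (6 - η)^2 / 16 + (6 - η)^4 / 16) := by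
          linarith
        nlinarith [mul_nonneg hΔ0 hinner]
      exact mul_nonneg h1 (sq_nonneg b)
    have hsq1 : 0 ≤ (η * (4 - η)) *
        (2*(c + d) - (6 - η)*a + ((2 - η) + Δ*(6 - η))*b)^2 :=
      mul_nonneg hα.le (sq_nonneg _)
    have hsq2 : 0 ≤ (2 * (η * (4 - η) / 8) * (a - b) + (Δ * (6 - η)^2 / 4) * b)^2 :=
      sq_nonneg _
    nlinarith [hsq1, hsq2, hres, hα]
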